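/- Let λ = (√5 − 1)/2 (so λ² + λ = 1, and λ²/(1−λ) = 1, λ/(1−λ) = 1/λ). Then μ_λ([λ, λ/(1−λ)]) = 2/3, and the equilibrium measure of the overlap is μ_λ( τ₀(X_λ) ∩ τ₁(X_λ) ) = μ_λ([λ, λ²/(1−λ)]) = μ_λ([λ, 1]) = 1/3. -/

import Mathlib

open MeasureTheory ENNReal Filter

namespace Stmt12Aux

def cylSet : Set (Set (ℕ → Bool)) :=
  {S | ∃ (n : ℕ) (w : Fin n → Bool), S = {ω | ∀ k : Fin n, ω k = w k}}

lemma measurableSet_cyl (n : ℕ) (w : Fin n → Bool) :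
    MeasurableSet {ω : ℕ → Bool | ∀ k : Fin n, ω k = w k} := by
  have h : {ω : ℕ → Bool | ∀ k : Fin n, ω k = w k}
      = ⋂ k : Fin n, (fun ω : ℕ → Bool => ω (k : ℕ)) ⁻¹' {w k} := by
    ext ω; simp [Set.mem_iInter]
  rw [h]
  exact MeasurableSet.iInter fun k => (measurable_pi_apply (k : ℕ)) (measurableSet_singleton _)

lemma coord_mem_generate (k : ℕ) (b : Bool) :
    MeasurableSet[MeasurableSpace.generateFrom cylSet] {ω : ℕ → Bool | ω k = b} := by
  have h : {ω : ℕ → Bool | ω k = b}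
      = ⋃ (w : Fin (k+1) → Bool) (_ : w (Fin.last k) = b),
          {ω : ℕ → Bool | ∀ j : Fin (k+1), ω (j : ℕ) = w j} := by
    ext ω
    simp only [Set.mem_iUnion, Set.mem_setOf_eq]
    constructor
    · intro hωk
      exact ⟨fun j => ω (j : ℕ), by simpa [Fin.val_last] using hωk, fun j => rfl⟩
    · rintro ⟨w, hw, hmem⟩
      have := hmem (Fin.last k)
      rw [Fin.val_last] at this
      rw [this, hw]
  rw [h]
  exact MeasurableSet.iUnion fun w => MeasurableSet.iUnion fun _ =>
    MeasurableSpace.measurableSet_generateFrom ⟨k + 1, w, rfl⟩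

lemma generate_eq :
    (inferInstance : MeasurableSpace (ℕ → Bool)) = MeasurableSpace.generateFrom cylSet := by
  refine le_antisymm ?_ (MeasurableSpace.generateFrom_le ?_)
  · rw [show (inferInstance : MeasurableSpace (ℕ → Bool)) = MeasurableSpace.pi from rfl,
      MeasurableSpace.pi]
    refine iSup_le fun k => ?_
    rw [MeasurableSpace.comap_le_iff_le_map]
    intro s _
    rw [MeasurableSpace.map_def]
    have h : (fun ω : ℕ → Bool => ω k) ⁻¹' s = ⋃ b ∈ s, {ω : ℕ → Bool | ω k = b} := by
      ext ω; simp [eq_comm]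
    rw [h]
    exact MeasurableSet.biUnion s.to_countable fun b _ => coord_mem_generate k b
  · rintro S ⟨n, w, rfl⟩
    exact measurableSet_cyl n w

lemma isPiSystem_cyl : IsPiSystem cylSet := by
  rintro s ⟨n, w, rfl⟩ t ⟨m, v, rfl⟩ ⟨ω₀, h0s, h0t⟩
  simp only [Set.mem_setOf_eq] at h0s h0t
  rcases le_total n m with h | h
  · refine ⟨m, v, ?_⟩
    refine Set.Subset.antisymm Set.inter_subset_right fun ω hω => ?_
    refine ⟨fun k => ?_, hω⟩
    have hk : (k : ℕ) < m := lt_of_lt_of_le k.2 h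
    have e1 : ω (k : ℕ) = v ⟨k, hk⟩ := hω ⟨k, hk⟩
    have e2 : ω₀ (k : ℕ) = v ⟨k, hk⟩ := h0t ⟨k, hk⟩
    rw [e1, ← e2, h0s k]
  · refine ⟨n, w, ?_⟩
    refine Set.Subset.antisymm Set.inter_subset_left fun ω hω => ?_
    refine ⟨hω, fun k => ?_⟩
    have hk : (k : ℕ) < n := lt_of_lt_of_le k.2 h
    have e1 : ω (k : ℕ) = w ⟨k, hk⟩ := hω ⟨k, hk⟩
    have e2 : ω₀ (k : ℕ) = w ⟨k, hk⟩ := h0s ⟨k, hk⟩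
    rw [e1, ← e2, h0t k]

def shift (ω : ℕ → Bool) (k : ℕ) : Bool := ω (k + 1)

lemma measurable_shift : Measurable shift :=
  measurable_pi_lambda _ fun k => measurable_pi_apply (k + 1)

lemma cons_cyl (c : Bool) (n : ℕ) (w : Fin n → Bool) :
    shift ⁻¹' {ω : ℕ → Bool | ∀ k : Fin n, ω k = w k} ∩ {ω | ω 0 = c}
      = {ω : ℕ → Bool | ∀ k : Fin (n+1), ω k = (Fin.cons c w : Fin (n+1) → Bool) k} := by
  ext ω
  simp only [Set.mem_inter_iff, Set.mem_preimage, Set.mem_setOf_eq]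
  constructor
  · rintro ⟨hs, h0⟩ j
    refine Fin.cases ?_ (fun i => ?_) j
    · simpa using h0
    · have := hs i
      simpa [shift, Fin.val_succ] using this
  · intro h
    refine ⟨fun k => ?_, ?_⟩
    · have := h k.succ
      simpa [shift, Fin.val_succ] using this
    · simpa using h 0

lemma half_two : (1/2 : ℝ≥0∞) * 2 = 1 := by
  rw [one_div, ENNReal.inv_mul_cancel] <;> norm_num

lemma key (P : Measure (ℕ → Bool)) [IsProbabilityMeasure P]
    (hP : ∀ (n : ℕ) (w : Fin n → Bool),
      P {ω | ∀ k : Fin n, ω k = w k} = (1 / 2) ^ n)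
    (c : Bool) (B : Set (ℕ → Bool)) (hB : MeasurableSet B) :
    P (shift ⁻¹' B ∩ {ω | ω 0 = c}) = (1 / 2) * P B := by
  set μ₁ : Measure (ℕ → Bool) := (2 : ℝ≥0∞) • ((P.restrict {ω | ω 0 = c}).map shift) with hμ₁
  have happ : ∀ (S : Set (ℕ → Bool)), MeasurableSet S →
      μ₁ S = 2 * P (shift ⁻¹' S ∩ {ω | ω 0 = c}) := by
    intro S hS
    rw [hμ₁, Measure.smul_apply, Measure.map_apply measurable_shift hS,
      Measure.restrict_apply (measurable_shift hS), smul_eq_mul]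
  have h0 : {ω : ℕ → Bool | ω 0 = c} = {ω : ℕ → Bool | ∀ k : Fin 1, ω k = c} := by
    ext ω
    constructor
    · intro h k
      have hk0 : (k : ℕ) = 0 := by omega
      rw [hk0]; exact h
    · intro h; exact h 0
  have hPeq : P = μ₁ := by
    refine ext_of_generate_finite cylSet generate_eq isPiSystem_cyl ?_ ?_
    · rintro S ⟨n, w, rfl⟩
      rw [happ _ (measurableSet_cyl n w), cons_cyl, hP (n+1) (Fin.cons c w : Fin (n+1) → Bool),
        hP n w, pow_succ, mul_comm ((1/2:ℝ≥0∞)^n) (1/2), ← mul_assoc]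
      rw [show (2:ℝ≥0∞) * (1/2) = 1 from by rw [mul_comm]; exact half_two, one_mul]
    · rw [happ _ MeasurableSet.univ]
      have huniv : shift ⁻¹' Set.univ ∩ {ω : ℕ → Bool | ω 0 = c}
          = {ω : ℕ → Bool | ω 0 = c} := by simp
      rw [huniv, h0, hP 1 (fun _ => c)]
      simp only [pow_one, measure_univ]
      rw [mul_comm]; exact half_two.symm
  have hB2 := happ B hB
  rw [← hPeq] at hB2
  rw [hB2, ← mul_assoc, half_two, one_mul]

lemma null_const (P : Measure (ℕ → Bool)) [IsProbabilityMeasure P]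
    (hP : ∀ (n : ℕ) (w : Fin n → Bool),
      P {ω | ∀ k : Fin n, ω k = w k} = (1 / 2) ^ n)
    (c : Bool) : P {ω | ∀ k, ω k = c} = 0 := by
  have hle : ∀ n : ℕ, P {ω | ∀ k, ω k = c} ≤ (1/2 : ℝ≥0∞) ^ n := by
    intro n
    have hsub : {ω : ℕ → Bool | ∀ k, ω k = c} ⊆ {ω | ∀ k : Fin n, ω k = c} :=
      fun ω hω k => hω k
    calc P {ω | ∀ k, ω k = c} ≤ P {ω | ∀ k : Fin n, ω (k : ℕ) = c} := measure_mono hsub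
      _ = (1/2 : ℝ≥0∞) ^ n := hP n (fun _ => c)
  have htend : Tendsto (fun n : ℕ => (1/2 : ℝ≥0∞) ^ n) atTop (nhds 0) := by
    apply ENNReal.tendsto_pow_atTop_nhds_zero_of_lt_one
    rw [one_div]
    exact ENNReal.inv_lt_one.2 one_lt_two
  exact le_zero_iff.1 (ge_of_tendsto' htend hle)

end Stmt12Aux

open Stmt12Aux in
/-- Let `λ = (√5 - 1)/2` (the reciprocal golden ratio, so
`λ² + λ = 1`). Then `μ_λ([λ, λ/(1-λ)]) = μ_λ(τ₁(X_λ)) = 2/3`, and the equilibrium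
measure of the overlap is `μ_λ(τ₀(X_λ) ∩ τ₁(X_λ)) = μ_λ([λ, λ²/(1-λ)]) = 1/3`. Here
`μ_λ(E) = P(π_λ⁻¹(E))`. -/
theorem stmt12 (l : ℝ) (hl : l = (Real.sqrt 5 - 1) / 2)
    (P : Measure (ℕ → Bool)) [IsProbabilityMeasure P]
    (hP : ∀ (n : ℕ) (w : Fin n → Bool),
      P {ω | ∀ k : Fin n, ω k = w k} = (1 / 2) ^ n)
    (pil : (ℕ → Bool) → ℝ)
    (hpil : ∀ ω, pil ω = ∑' k : ℕ, (if ω k then l ^ (k + 1) else 0)) :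
    P {ω | pil ω ∈ Set.Icc l (l / (1 - l))} = 2 / 3 ∧
      P {ω | pil ω ∈ Set.Icc l (l ^ 2 / (1 - l))} = 1 / 3 := by
  -- numeric facts
  have h5 : Real.sqrt 5 ^ 2 = 5 := Real.sq_sqrt (by norm_num)
  have h5lb : (2 : ℝ) < Real.sqrt 5 := by nlinarith [Real.sqrt_nonneg 5]
  have h5ub : Real.sqrt 5 < 3 := by nlinarith [Real.sqrt_nonneg 5]
  have hl0 : 0 < l := by rw [hl]; linarith
  have hl1 : l < 1 := by rw [hl]; linarith
  have hsq : l ^ 2 = 1 - l := by rw [hl]; nlinarith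
  have h1l : (0:ℝ) < 1 - l := by linarith
  -- summability
  have hgeom : Summable (fun k : ℕ => l ^ (k + 1)) := by
    have := (summable_geometric_of_lt_one hl0.le hl1).mul_left l
    refine this.congr fun k => ?_
    rw [pow_succ, mul_comm]
  have hsumm : ∀ ω : ℕ → Bool, Summable (fun k => if ω k then l ^ (k + 1) else 0) := by
    intro ω
    refine Summable.of_nonneg_of_le (fun k => ?_) (fun k => ?_) hgeom
    · split <;> positivity
    · split
      · exact le_refl _
      · positivity
  -- basic bounds on pil
  have hnonneg : ∀ ω, 0 ≤ pil ω := by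
    intro ω
    rw [hpil]
    refine tsum_nonneg fun k => ?_
    split <;> positivity
  have hgeomsum : ∑' k : ℕ, l ^ (k + 1) = l / (1 - l) := by
    have h1 : ∑' k : ℕ, l ^ (k + 1) = l * ∑' k : ℕ, l ^ k := by
      rw [← tsum_mul_left]
      exact tsum_congr fun k => by rw [pow_succ, mul_comm]
    rw [h1, tsum_geometric_of_lt_one hl0.le hl1, div_eq_mul_inv]
  have hub : ∀ ω, pil ω ≤ l / (1 - l) := by
    intro ω
    rw [hpil, ← hgeomsum]
    refine Summable.tsum_le_tsum (fun k => ?_) (hsumm ω) hgeom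
    split
    · exact le_refl _
    · positivity
  -- recursion
  have hrec : ∀ ω, pil ω = (if ω 0 then l else 0) + l * pil (shift ω) := by
    intro ω
    rw [hpil, Summable.tsum_eq_zero_add (hsumm ω)]
    congr 1
    · simp
    · rw [hpil (shift ω), ← tsum_mul_left]
      refine tsum_congr fun k => ?_
      by_cases h : ω (k + 1) = true <;> simp [shift, h] <;> ring
  -- measurability of pil
  have hm : Measurable pil := by
    have hpil' : pil = fun ω => ∑' k : ℕ, (if ω k then l ^ (k + 1) else 0) := funext hpil
    rw [hpil']
    refine measurable_of_tendsto_metrizable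
      (f := fun n ω => ∑ k ∈ Finset.range n, (if ω k then l ^ (k + 1) else 0)) (fun n => ?_) ?_
    · refine Finset.measurable_sum _ fun k _ => ?_
      exact (Measurable.of_discrete (f := fun b : Bool => if b then l ^ (k + 1) else 0)).comp
        (measurable_pi_apply k)
    · rw [tendsto_pi_nhds]
      intro ω
      exact (hsumm ω).hasSum.tendsto_sum_nat
  -- the splitting identity
  have split : ∀ A : Set ℝ, MeasurableSet A →
      P {ω | pil ω ∈ A} = 1/2 * P {ω | l + l * pil ω ∈ A} + 1/2 * P {ω | l * pil ω ∈ A} := by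
    intro A hA
    have mB1 : MeasurableSet {ω' | l + l * pil ω' ∈ A} :=
      (measurable_const.add (measurable_const.mul hm)) hA
    have mB2 : MeasurableSet {ω' | l * pil ω' ∈ A} := (measurable_const.mul hm) hA
    have hdec : {ω | pil ω ∈ A}
        = (shift ⁻¹' {ω' | l + l * pil ω' ∈ A} ∩ {ω | ω 0 = true})
          ∪ (shift ⁻¹' {ω' | l * pil ω' ∈ A} ∩ {ω | ω 0 = false}) := by
      ext ω
      simp only [Set.mem_union, Set.mem_inter_iff, Set.mem_preimage, Set.mem_setOf_eq]
      cases h : ω 0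
      · rw [hrec ω, h]; simp
      · rw [hrec ω, h]; simp
    have hdisj : Disjoint
        (shift ⁻¹' {ω' | l + l * pil ω' ∈ A} ∩ {ω | ω 0 = true})
        (shift ⁻¹' {ω' | l * pil ω' ∈ A} ∩ {ω | ω 0 = false}) := by
      refine Set.disjoint_left.2 fun ω h1 h2 => ?_
      have ht := h1.2
      have hf := h2.2
      simp only [Set.mem_setOf_eq] at ht hf
      rw [ht] at hf
      exact Bool.noConfusion hf
    have hmeas2 : MeasurableSet (shift ⁻¹' {ω' | l * pil ω' ∈ A} ∩ {ω | ω 0 = false}) := by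
      refine (measurable_shift mB2).inter ?_
      have h0f : {ω : ℕ → Bool | ω 0 = false} = (fun ω : ℕ → Bool => ω 0) ⁻¹' {false} := by
        ext ω; simp
      rw [h0f]
      exact (measurable_pi_apply 0) (measurableSet_singleton false)
    rw [hdec, measure_union hdisj hmeas2, key P hP true _ mB1, key P hP false _ mB2]
  -- all-true null set
  have hallTrue : P {ω | (l / (1 - l)) ≤ pil ω} = 0 := by
    refine measure_mono_null ?_ (null_const P hP true)
    intro ω hω k
    simp only [Set.mem_setOf_eq] at hω
    by_contra hk
    have hkf : ω k = false := by
      cases hωk : ω k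
      · rfl
      · exact absurd hωk hk
    -- pil ω ≤ l/(1-l) - l^(k+1)
    have hbound : pil ω ≤ l / (1 - l) - l ^ (k + 1) := by
      have hle : ∀ j : ℕ, (if ω j then l ^ (j + 1) else 0)
          ≤ (if j = k then 0 else l ^ (j + 1)) := by
        intro j
        by_cases hj : j = k
        · subst hj; rw [hkf]; simp
        · simp only [hj, if_false]
          split
          · exact le_refl _
          · positivity
      have hsum2 : Summable (fun j : ℕ => if j = k then 0 else l ^ (j + 1)) := by
        refine Summable.of_nonneg_of_le (fun j => ?_) (fun j => ?_) hgeom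
        · split <;> positivity
        · split
          · positivity
          · exact le_refl _
      have h2 : pil ω ≤ ∑' j : ℕ, (if j = k then 0 else l ^ (j + 1)) := by
        rw [hpil]
        exact Summable.tsum_le_tsum hle (hsumm ω) hsum2
      have h3 : (∑' j : ℕ, (if j = k then 0 else l ^ (j + 1))) + l ^ (k + 1)
          = l / (1 - l) := by
        rw [← hgeomsum]
        have h4 : (∑' j : ℕ, (if j = k then l ^ (j+1) else 0)) = l ^ (k + 1) := by
          have := tsum_ite_eq k (fun _ => l ^ (k + 1))
          refine Eq.trans (tsum_congr fun j => ?_) this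
          by_cases hj : j = k <;> simp [hj]
        rw [← h4, ← Summable.tsum_add hsum2]
        · exact tsum_congr fun j => by by_cases hj : j = k <;> simp [hj]
        · refine Summable.of_nonneg_of_le (fun j => ?_) (fun j => ?_) hgeom
          · split <;> positivity
          · split
            · exact le_refl _
            · positivity
      linarith [h2, h3]
    have hpos : (0:ℝ) < l ^ (k + 1) := by positivity
    linarith
  -- pil positive a.s.
  have hpos1 : P {ω | 0 < pil ω} = 1 := by
    have hcompl : {ω | 0 < pil ω} = {ω | pil ω ≤ 0}ᶜ := by
      ext ω; simp [not_le]
    have hnull : P {ω | pil ω ≤ 0} = 0 := by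
      refine measure_mono_null ?_ (null_const P hP false)
      intro ω hω k
      simp only [Set.mem_setOf_eq] at hω
      by_contra hk
      have hkt : ω k = true := by
        cases hωk : ω k
        · exact absurd hωk hk
        · rfl
      have : l ^ (k + 1) ≤ pil ω := by
        rw [hpil]
        have := Summable.le_tsum (hsumm ω) k (fun j _ => by split <;> positivity)
        simpa [hkt] using this
      have hpos : (0:ℝ) < l ^ (k + 1) := by positivity
      linarith
    have hmeas : MeasurableSet {ω | pil ω ≤ 0} := hm measurableSet_Iic
    rw [hcompl, measure_compl hmeas (measure_ne_top P _), hnull, measure_univ, tsub_zero]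
  -- key reductions of sets
  have hMeq : l / (1 - l) = 1 / l := by
    rw [← hsq]; field_simp
  -- define the four quantities
  set a := P {ω | pil ω ∈ Set.Ici l} with ha
  set b := P {ω | pil ω ∈ Set.Ici (1:ℝ)} with hb
  set c := P {ω | pil ω ∈ Set.Ioi (1:ℝ)} with hc
  set d := P {ω | pil ω ∈ Set.Ioi l} with hd
  -- equation for a
  have eqa : a = 1/2 * 1 + 1/2 * b := by
    have h1 : {ω | l + l * pil ω ∈ Set.Ici l} = Set.univ := by
      ext ω
      simp only [Set.mem_setOf_eq, Set.mem_Ici, Set.mem_univ, iff_true]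
      nlinarith [hnonneg ω]
    have h2 : {ω | l * pil ω ∈ Set.Ici l} = {ω | pil ω ∈ Set.Ici (1:ℝ)} := by
      ext ω
      simp only [Set.mem_setOf_eq, Set.mem_Ici]
      constructor <;> intro h <;> nlinarith
    rw [ha, split (Set.Ici l) measurableSet_Ici, h1, h2, measure_univ, ← hb]
  -- equation for b
  have eqb : b = 1/2 * a + 1/2 * 0 := by
    have h1 : {ω | l + l * pil ω ∈ Set.Ici (1:ℝ)} = {ω | pil ω ∈ Set.Ici l} := by
      ext ω
      simp only [Set.mem_setOf_eq, Set.mem_Ici]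
      constructor <;> intro h <;> nlinarith
    have h2 : P {ω | l * pil ω ∈ Set.Ici (1:ℝ)} = 0 := by
      refine measure_mono_null ?_ hallTrue
      intro ω hω
      simp only [Set.mem_setOf_eq, Set.mem_Ici] at hω ⊢
      rw [hMeq, div_le_iff₀ hl0]
      nlinarith
    rw [hb, split (Set.Ici 1) measurableSet_Ici, h1, h2, ← ha]
  -- equation for c
  have eqc : c = 1/2 * d + 1/2 * 0 := by
    have h1 : {ω | l + l * pil ω ∈ Set.Ioi (1:ℝ)} = {ω | pil ω ∈ Set.Ioi l} := by
      ext ω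
      simp only [Set.mem_setOf_eq, Set.mem_Ioi]
      constructor <;> intro h <;> nlinarith
    have h2 : {ω | l * pil ω ∈ Set.Ioi (1:ℝ)} = ∅ := by
      ext ω
      simp only [Set.mem_setOf_eq, Set.mem_Ioi, Set.mem_empty_iff_false, iff_false, not_lt]
      have h1' := hub ω
      rw [hMeq] at h1'
      rw [← le_div_iff₀' hl0]
      exact h1'
    rw [hc, split (Set.Ioi 1) measurableSet_Ioi, h1, h2, measure_empty, ← hd]
  -- equation for d
  have eqd : d = 1/2 * 1 + 1/2 * c := by
    have h1 : {ω | l + l * pil ω ∈ Set.Ioi l} = {ω | 0 < pil ω} := by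
      ext ω
      simp only [Set.mem_setOf_eq, Set.mem_Ioi]
      constructor <;> intro h <;> nlinarith
    have h2 : {ω | l * pil ω ∈ Set.Ioi l} = {ω | pil ω ∈ Set.Ioi (1:ℝ)} := by
      ext ω
      simp only [Set.mem_setOf_eq, Set.mem_Ioi]
      constructor <;> intro h <;> nlinarith
    rw [hd, split (Set.Ioi l) measurableSet_Ioi, h1, h2, hpos1, ← hc]
  -- solve for a and c
  have hane : a ≠ ⊤ := measure_ne_top P _
  have hbne : b ≠ ⊤ := measure_ne_top P _
  have hcne : c ≠ ⊤ := measure_ne_top P _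
  have hdne : d ≠ ⊤ := measure_ne_top P _
  have hhalf : (1/2 : ℝ≥0∞) ≠ ⊤ := by
    rw [one_div]
    exact ENNReal.inv_ne_top.2 (by norm_num)
  have htr : ∀ x : ℝ≥0∞, x ≠ ⊤ → ∀ y : ℝ≥0∞, y ≠ ⊤ →
      x = 1/2 * y + 1/2 * 0 → x.toReal = 1/2 * y.toReal := by
    intro x hx y hy h
    rw [h, mul_zero, add_zero, ENNReal.toReal_mul]
    norm_num [ENNReal.toReal_div]
  have htr1 : ∀ x : ℝ≥0∞, x ≠ ⊤ → ∀ y : ℝ≥0∞, y ≠ ⊤ →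
      x = 1/2 * 1 + 1/2 * y → x.toReal = 1/2 + 1/2 * y.toReal := by
    intro x hx y hy h
    rw [h, ENNReal.toReal_add (ENNReal.mul_ne_top hhalf ENNReal.one_ne_top)
      (ENNReal.mul_ne_top hhalf hy), ENNReal.toReal_mul, ENNReal.toReal_mul]
    norm_num [ENNReal.toReal_div]
  have ra : a.toReal = 1/2 + 1/2 * b.toReal := htr1 a hane b hbne eqa
  have rb : b.toReal = 1/2 * a.toReal := htr b hbne a hane eqb
  have rc : c.toReal = 1/2 * d.toReal := htr c hcne d hdne eqc
  have rd : d.toReal = 1/2 + 1/2 * c.toReal := htr1 d hdne c hcne eqd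
  have raval : a.toReal = 2/3 := by linarith
  have rcval : c.toReal = 1/3 := by linarith
  have h23ne : (2/3 : ℝ≥0∞) ≠ ⊤ := (ENNReal.div_lt_top (by norm_num) (by norm_num)).ne
  have h13ne : (1/3 : ℝ≥0∞) ≠ ⊤ := (ENNReal.div_lt_top (by norm_num) (by norm_num)).ne
  have haval : a = 2/3 := by
    refine (ENNReal.toReal_eq_toReal_iff' hane h23ne).1 ?_
    rw [raval, ENNReal.toReal_div]
    norm_num
  have hcval : c = 1/3 := by
    refine (ENNReal.toReal_eq_toReal_iff' hcne h13ne).1 ?_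
    rw [rcval, ENNReal.toReal_div]
    norm_num
  constructor
  · have hset : {ω | pil ω ∈ Set.Icc l (l / (1 - l))} = {ω | pil ω ∈ Set.Ici l} := by
      ext ω
      simp only [Set.mem_setOf_eq, Set.mem_Icc, Set.mem_Ici]
      exact ⟨fun h => h.1, fun h => ⟨h, hub ω⟩⟩
    rw [hset, ← ha, haval]
  · have hset : {ω | pil ω ∈ Set.Icc l (l ^ 2 / (1 - l))}
        = {ω | pil ω ∈ Set.Ici l} \ {ω | pil ω ∈ Set.Ioi (1:ℝ)} := by
      have h21 : l ^ 2 / (1 - l) = 1 := by rw [hsq]; field_simp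
      ext ω
      simp only [h21, Set.mem_setOf_eq, Set.mem_Icc, Set.mem_Ici, Set.mem_Ioi, Set.mem_diff,
        not_lt]
    have hsub : {ω | pil ω ∈ Set.Ioi (1:ℝ)} ⊆ {ω | pil ω ∈ Set.Ici l} := by
      intro ω hω
      simp only [Set.mem_setOf_eq, Set.mem_Ioi, Set.mem_Ici] at hω ⊢
      linarith
    rw [hset, measure_diff hsub ((hm measurableSet_Ioi).nullMeasurableSet) (measure_ne_top P _),
      ← ha, ← hc, haval, hcval]
    rw [show (2/3 : ℝ≥0∞) = 1/3 + 1/3 from by rw [ENNReal.div_add_div_same]; norm_num]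
    rw [ENNReal.add_sub_cancel_right h13ne]
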